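/- Suppose 0 < φⁿ < 1 pointwise, λ ≥ 0 with 4(λ+1) − θ > 0, and φⁿ⁺¹ satisfies (1/τ)(φⁿ⁺¹ − φⁿ) − ε²Δ_h φⁿ⁺¹ + ν(φⁿ)φⁿ⁺¹ = r(φⁿ) where ν(s) = (λ+1)(1/s + 1/(1−s)) − θ and r(s) = −ln(s) + ln(1−s) + (λ+1)/(1−s) − θ(1−s). If r(s) > 0 for all s ∈ (0,1), then φⁿ⁺¹ > 0 pointwise. -/
import Mathlib


noncomputable def gradX {N M : ℕ} (h : ℝ) (φ : Fin N × Fin M → ℝ)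
    (p : Fin (N + 1) × Fin M) : ℝ :=
  if hp : 0 < p.1.val ∧ p.1.val < N then
    (φ (⟨p.1.val, hp.2⟩, p.2) - φ (⟨p.1.val - 1, by omega⟩, p.2)) / h
  else 0

noncomputable def gradY {N M : ℕ} (h : ℝ) (φ : Fin N × Fin M → ℝ)
    (p : Fin N × Fin (M + 1)) : ℝ :=
  if hp : 0 < p.2.val ∧ p.2.val < M then
    (φ (p.1, ⟨p.2.val, hp.2⟩) - φ (p.1, ⟨p.2.val - 1, by omega⟩)) / h
  else 0

/-- Cell-centered five-point discrete Laplacian with homogeneous Neumann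
boundary conditions (boundary fluxes vanish). -/
noncomputable def discLap {N M : ℕ} (h : ℝ) (φ : Fin N × Fin M → ℝ)
    (p : Fin N × Fin M) : ℝ :=
  (gradX h φ (p.1.succ, p.2) - gradX h φ (p.1.castSucc, p.2)) / h
    + (gradY h φ (p.1, p.2.succ) - gradY h φ (p.1, p.2.castSucc)) / h

/-- Discrete L² inner product. -/
noncomputable def discInner {N M : ℕ} (h : ℝ) (φ ψ : Fin N × Fin M → ℝ) : ℝ :=
  h ^ 2 * ∑ p : Fin N × Fin M, φ p * ψ p

/-- Discrete H¹ seminorm squared: ‖∇ₕφ‖². -/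
noncomputable def discGradNormSq {N M : ℕ} (h : ℝ) (φ : Fin N × Fin M → ℝ) : ℝ :=
  h ^ 2 * ((∑ p : Fin (N + 1) × Fin M, gradX h φ p ^ 2)
    + ∑ p : Fin N × Fin (M + 1), gradY h φ p ^ 2)

noncomputable def nuCoef (lam θ s : ℝ) : ℝ := (lam + 1) * (1 / s + 1 / (1 - s)) - θ

noncomputable def rCoef (lam θ s : ℝ) : ℝ :=
  -Real.log s + Real.log (1 - s) + (lam + 1) / (1 - s) - θ * (1 - s)

lemma discLap_nonneg_at_min {N M : ℕ} {h : ℝ} (hh : 0 < h) (φ : Fin N × Fin M → ℝ)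
    (q : Fin N × Fin M) (hq : ∀ y, φ q ≤ φ y) : 0 ≤ discLap h φ q := by
  have hA : 0 ≤ gradX h φ (q.1.succ, q.2) := by
    unfold gradX
    split
    · rename_i hp
      apply div_nonneg _ hh.le
      have e : (⟨((q.1.succ, q.2) : Fin (N+1) × Fin M).1.val - 1, by omega⟩ : Fin N) = q.1 := by
        ext; simp
      rw [e]
      have h2 := hq (⟨((q.1.succ, q.2) : Fin (N+1) × Fin M).1.val, hp.2⟩, ((q.1.succ, q.2) : Fin (N+1) × Fin M).2)
      linarith
    · exact le_refl 0
  have hB : gradX h φ (q.1.castSucc, q.2) ≤ 0 := by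
    unfold gradX
    split
    · rename_i hp
      apply div_nonpos_of_nonpos_of_nonneg _ hh.le
      have e : (⟨((q.1.castSucc, q.2) : Fin (N+1) × Fin M).1.val, hp.2⟩ : Fin N) = q.1 := by
        ext; simp
      rw [e]
      have h2 := hq (⟨((q.1.castSucc, q.2) : Fin (N+1) × Fin M).1.val - 1, by omega⟩, ((q.1.castSucc, q.2) : Fin (N+1) × Fin M).2)
      linarith
    · exact le_refl 0
  have hC : 0 ≤ gradY h φ (q.1, q.2.succ) := by
    unfold gradY
    split
    · rename_i hp
      apply div_nonneg _ hh.le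
      have e : (⟨((q.1, q.2.succ) : Fin N × Fin (M+1)).2.val - 1, by omega⟩ : Fin M) = q.2 := by
        ext; simp
      rw [e]
      have h2 := hq (((q.1, q.2.succ) : Fin N × Fin (M+1)).1, ⟨((q.1, q.2.succ) : Fin N × Fin (M+1)).2.val, hp.2⟩)
      linarith
    · exact le_refl 0
  have hD : gradY h φ (q.1, q.2.castSucc) ≤ 0 := by
    unfold gradY
    split
    · rename_i hp
      apply div_nonpos_of_nonpos_of_nonneg _ hh.le
      have e : (⟨((q.1, q.2.castSucc) : Fin N × Fin (M+1)).2.val, hp.2⟩ : Fin M) = q.2 := by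
        ext; simp
      rw [e]
      have h2 := hq (((q.1, q.2.castSucc) : Fin N × Fin (M+1)).1, ⟨((q.1, q.2.castSucc) : Fin N × Fin (M+1)).2.val - 1, by omega⟩)
      linarith
    · exact le_refl 0
  unfold discLap
  have t1 : 0 ≤ (gradX h φ (q.1.succ, q.2) - gradX h φ (q.1.castSucc, q.2)) / h :=
    div_nonneg (by linarith) hh.le
  have t2 : 0 ≤ (gradY h φ (q.1, q.2.succ) - gradY h φ (q.1, q.2.castSucc)) / h :=
    div_nonneg (by linarith) hh.le
  linarith

theorem discrete_maximum_principle_lower {N M : ℕ} (h τ ε lam θ : ℝ)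
    (hh : 0 < h) (hτ : 0 < τ) (hε : 0 < ε) (hlam : 0 ≤ lam)
    (hcoer : 0 < 4 * (lam + 1) - θ)
    (φ0 φ1 : Fin N × Fin M → ℝ)
    (h0 : ∀ p, φ0 p ∈ Set.Ioo (0:ℝ) 1)
    (hscheme : ∀ p, (φ1 p - φ0 p) / τ - ε ^ 2 * discLap h φ1 p
      + nuCoef lam θ (φ0 p) * φ1 p = rCoef lam θ (φ0 p))
    (hr : ∀ s : ℝ, s ∈ Set.Ioo (0:ℝ) 1 → 0 < rCoef lam θ s) :
    ∀ p, 0 < φ1 p := by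
  intro p
  have hne : Nonempty (Fin N × Fin M) := ⟨p⟩
  obtain ⟨q, hq⟩ := Finite.exists_min φ1
  suffices hq0 : 0 < φ1 q from lt_of_lt_of_le hq0 (hq p)
  by_contra hle
  push_neg at hle
  obtain ⟨hs0, hs1⟩ := h0 q
  have h1s : 0 < 1 - φ0 q := by linarith
  have hkey : (4 : ℝ) ≤ 1 / φ0 q + 1 / (1 - φ0 q) := by
    rw [div_add_div _ _ (ne_of_gt hs0) (ne_of_gt h1s), le_div_iff₀ (by positivity)]
    nlinarith [sq_nonneg (2 * φ0 q - 1)]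
  have hν : 0 < nuCoef lam θ (φ0 q) := by
    unfold nuCoef
    nlinarith
  have hΔ : 0 ≤ discLap h φ1 q := discLap_nonneg_at_min hh φ1 q hq
  have hsch := hscheme q
  have hrq := hr (φ0 q) ⟨hs0, hs1⟩
  have hdiv : (φ1 q - φ0 q) / τ < 0 := div_neg_of_neg_of_pos (by linarith) hτ
  nlinarith [mul_nonpos_of_nonneg_of_nonpos hν.le hle, mul_nonneg (sq_nonneg ε) hΔ]
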